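/- (Case n = 1 of the paper's lemma characterizing torsion triangles via precovers.) Let C be a pretriangulated category, X a class of objects of C, and let x →ξ c →γ y →φ Σx be a distinguished triangle with x ∈ X. Then the following are equivalent: (1) Hom_C(x̃, y) = 0 for every x̃ ∈ X; (2) ξ is an X-precover of c and φ ∘ g = 0 for every morphism g : x̃ → y with x̃ ∈ X. -/

import Mathlib

open CategoryTheory Limits Pretriangulated

/-- Case `n = 1` of the lemma characterizing torsion triangles via precovers:
for a distinguished triangle `x ⟶ξ c ⟶γ y ⟶φ Σx` with `x ∈ X`, one has
`Hom(x̃, y) = 0` for all `x̃ ∈ X` iff `ξ` is an `X`-precover of `c` and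
`φ ∘ g = 0` for every `g : x̃ ⟶ y` with `x̃ ∈ X`. -/
theorem torsion_triangle_iff_precover
    {C : Type*} [Category C] [HasZeroObject C] [Preadditive C] [HasShift C ℤ]
    [∀ n : ℤ, (shiftFunctor C n).Additive] [Pretriangulated C]
    (X : Set C)
    (x c y : C) (ξ : x ⟶ c) (γ : c ⟶ y) (φ : y ⟶ x⟦(1 : ℤ)⟧)
    (hT : Triangle.mk ξ γ φ ∈ distTriang C)
    (hx : x ∈ X) :
    ((∀ x' ∈ X, ∀ f : x' ⟶ y, f = 0)
      ↔
    ((∀ x' ∈ X, ∀ f : x' ⟶ c, ∃ g : x' ⟶ x, g ≫ ξ = f) ∧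
      (∀ x' ∈ X, ∀ g : x' ⟶ y, g ≫ φ = 0))) := by
  constructor
  · intro h
    constructor
    · intro x' hx' f
      obtain ⟨g, hg⟩ := Triangle.coyoneda_exact₂ _ hT f (h x' hx' (f ≫ γ))
      exact ⟨g, hg.symm⟩
    · intro x' hx' g
      rw [h x' hx' g, zero_comp]
  · rintro ⟨h₁, h₂⟩ x' hx' f
    obtain ⟨g, hg⟩ := Triangle.coyoneda_exact₃ _ hT f (h₂ x' hx' f)
    obtain ⟨k, hk⟩ := h₁ x' hx' g
    erw [hg, ← hk, Category.assoc,
      show ξ ≫ (Triangle.mk ξ γ φ).mor₂ = 0 from comp_distTriang_mor_zero₁₂ _ hT,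
      comp_zero]
    rfl
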